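/- (High fine precludes full inspection.) Suppose F_l > Δc^θ(0). Then in any PBE (σ*, β*), σ^d*_H < 1: the operator never inspects all agents on server H. -/
import Mathlib


open Set

/-- Perfect Bayesian equilibrium of the two-server misbehavior-inspection signaling game.
The strategy profile is `(sh, sl, dH, dL)` (misbehavior rates of types `h` and `l`, and the
operator's inspection probabilities on servers `H` and `L`) and the belief assessment is
`(bhH, blH, bhL, blL)`. -/
def IsPBE (θ pth ptl pd Fh Fl : ℝ) (cH cL : ℝ → ℝ → ℝ)
    (sh sl dH dL bhH blH bhL blL : ℝ) : Prop :=
  sh ∈ Icc (0:ℝ) 1 ∧ sl ∈ Icc (0:ℝ) 1 ∧ dH ∈ Icc (0:ℝ) 1 ∧ dL ∈ Icc (0:ℝ) 1 ∧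
  bhH ∈ Icc (0:ℝ) 1 ∧ blH = 1 - bhH ∧ bhL ∈ Icc (0:ℝ) 1 ∧ blL = 1 - bhL ∧
  -- sequential rationality of type h agents
  (0 < sh → -(cL sh sl) - pth - Fh * dL ≥ -(cH sh sl)) ∧
  (sh < 1 → -(cL sh sl) - pth - Fh * dL ≤ -(cH sh sl)) ∧
  -- sequential rationality of type l agents
  (0 < sl → -(cH sh sl) - ptl - Fl * dH ≥ -(cL sh sl)) ∧
  (sl < 1 → -(cH sh sl) - ptl - Fl * dH ≤ -(cL sh sl)) ∧
  -- operator optimality on servers H and L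
  (∀ x ∈ Icc (0:ℝ) 1, (-pd + Fl * blH) * x ≤ (-pd + Fl * blH) * dH) ∧
  (∀ x ∈ Icc (0:ℝ) 1, (-pd + Fh * bhL) * x ≤ (-pd + Fh * bhL) * dL) ∧
  -- consistency of beliefs (Bayes' rule)
  (0 < θ * (1 - sh) + (1 - θ) * sl →
    bhH = θ * (1 - sh) / (θ * (1 - sh) + (1 - θ) * sl)) ∧
  (0 < θ * sh + (1 - θ) * (1 - sl) →
    bhL = θ * sh / (θ * sh + (1 - θ) * (1 - sl)))

/-- High fine precludes full inspection: if `Fl > Δcᵗʰ(0)`, then in any PBE the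
operator never inspects all agents on server H. -/
theorem high_fine_no_full_inspection
    (θ pth ptl pd Fh Fl : ℝ) (cH cL : ℝ → ℝ → ℝ)
    (hθ : θ ∈ Ioo (0:ℝ) 1) (hpth : 0 ≤ pth) (hptl : 0 < ptl)
    (hpd : 0 < pd) (hFh : 0 ≤ Fh) (hFl : 0 ≤ Fl)
    (hA1 : cH 0 0 < cL 0 0 ∧ cL 0 1 < cH 0 1)
    (hA2Hh : ∀ y ∈ Icc (0:ℝ) 1, StrictAntiOn (fun x => cH x y) (Icc 0 1))
    (hA2Hl : ∀ x ∈ Icc (0:ℝ) 1, StrictMonoOn (fun y => cH x y) (Icc 0 1))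
    (hA2Lh : ∀ y ∈ Icc (0:ℝ) 1, StrictMonoOn (fun x => cL x y) (Icc 0 1))
    (hA2Ll : ∀ x ∈ Icc (0:ℝ) 1, StrictAntiOn (fun y => cL x y) (Icc 0 1))
    (sh sl dH dL bhH blH bhL blL : ℝ)
    (hPBE : IsPBE θ pth ptl pd Fh Fl cH cL sh sl dH dL bhH blH bhL blL)
    (hfine : cL 0 0 - cH 0 0 < Fl) :
    dH < 1 := by
  obtain ⟨hsh, hsl, hdH, hdL, hbhH, hblH, hbhL, hblL,
    hrh1, hrh2, hrl1, hrl2, hoH, hoL, hbayesH, hbayesL⟩ := hPBE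
  by_contra hcon
  push_neg at hcon
  have hdH1 : dH = 1 := le_antisymm hdH.2 hcon
  -- operator optimality: blH > 0
  have h0 := hoH 0 ⟨le_refl 0, zero_le_one⟩
  have h0' : 0 ≤ -pd + Fl * blH := by rw [hdH1] at h0; linarith
  have hblHpos : 0 < blH := by
    by_contra hb
    push_neg at hb
    nlinarith [mul_nonpos_of_nonneg_of_nonpos hFl hb]
  have h01 : (0:ℝ) ∈ Icc (0:ℝ) 1 := ⟨le_refl 0, zero_le_one⟩
  have h11 : (1:ℝ) ∈ Icc (0:ℝ) 1 := ⟨zero_le_one, le_refl 1⟩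
  have hFhdL : 0 ≤ Fh * dL := mul_nonneg hFh hdL.1
  -- sl > 0
  have hslpos : 0 < sl := by
    rcases lt_or_eq_of_le hsl.1 with h | h
    · exact h
    · exfalso
      rcases lt_or_eq_of_le hsh.2 with hsh1 | hsh1
      · have hD : 0 < θ * (1 - sh) + (1 - θ) * sl := by nlinarith [hθ.1, hθ.2]
        have := hbayesH hD
        rw [← h] at this
        have hD' : 0 < θ * (1 - sh) := by nlinarith
        have : bhH = 1 := by
          rw [this, mul_zero, add_zero]; exact div_self (ne_of_gt hD')
        linarith [hblH, this]
      · -- sh = 1, sl = 0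
        have hr := hrh1 (by rw [hsh1]; exact one_pos)
        rw [hsh1, ← h] at hr
        have h1 : cH 1 0 < cH 0 0 := hA2Hh 0 h01 h01 h11 one_pos
        have h2 : cL 0 0 < cL 1 0 := hA2Lh 0 h01 h01 h11 one_pos
        linarith [hA1.1]
  -- l's rationality gives cL - cH ≥ ptl + Fl
  have hgap : cL sh sl - cH sh sl ≥ ptl + Fl := by
    have := hrl1 hslpos
    rw [hdH1] at this; linarith
  have hcHlt : cH sh sl < cL sh sl := by nlinarith
  -- sh = 0
  have hsh0 : sh = 0 := by
    by_contra hne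
    have hshpos : 0 < sh := lt_of_le_of_ne hsh.1 (Ne.symm hne)
    have := hrh1 hshpos
    linarith
  rw [hsh0] at hgap
  have h3 : cL 0 sl < cL 0 0 := hA2Ll 0 h01 h01 ⟨le_of_lt hslpos, hsl.2⟩ hslpos
  have h4 : cH 0 0 < cH 0 sl := hA2Hl 0 h01 h01 ⟨le_of_lt hslpos, hsl.2⟩ hslpos
  linarith
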